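/- Let q, h, a be the Frenet frame of a developable timelike ruled surface φ of type M₋¹ with striction curve c, c' = q, and Frenet equations q' = σ h, h' = σ q + σκ a, a' = -σκ h with σκ ≠ 0. Then the ruled surface φ_{h*}(s,v) = c*(s) + v a(s) (where c* = c + R a, R constant) has nonzero distribution parameter p_{h*} = -1/(σκ); in particular φ_{h*} is nondevelopable. -/

import Mathlib

/-- Minkowski inner product on ℝ³: ⟨x,y⟩ = -x₁y₁ + x₂y₂ + x₃y₃. -/
def mdot (x y : Fin 3 → ℝ) : ℝ := -(x 0 * y 0) + x 1 * y 1 + x 2 * y 2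

/-- Lorentzian cross product. -/
def mcross (x y : Fin 3 → ℝ) : Fin 3 → ℝ :=
  ![x 1 * y 2 - x 2 * y 1, x 0 * y 2 - x 2 * y 0, x 1 * y 0 - x 0 * y 1]

/-- Lorentzian triple product. -/
def mtriple (u v w : Fin 3 → ℝ) : ℝ := mdot (mcross u v) w

/-- The surface generated by h* = a over c* = c + R a (Mannheim offset data of a
developable timelike ruled surface of type M₋¹) has distribution parameter
p_{h*} = -1/(σκ) ≠ 0, hence is nondevelopable. -/
theorem offset_h_star_nondevelopable (q h a c : ℝ → Fin 3 → ℝ)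
    (κ σ : ℝ → ℝ) (R : ℝ)
    (hq : Differentiable ℝ q) (hh : Differentiable ℝ h) (ha : Differentiable ℝ a)
    (hc : Differentiable ℝ c)
    (hqq : ∀ s, mdot (q s) (q s) = -1)
    (hhh : ∀ s, mdot (h s) (h s) = 1)
    (haa : ∀ s, mdot (a s) (a s) = 1)
    (hqh : ∀ s, mdot (q s) (h s) = 0)
    (hqa : ∀ s, mdot (q s) (a s) = 0)
    (hha : ∀ s, mdot (h s) (a s) = 0)
    (hor : ∀ s, mcross (q s) (h s) = -(a s))
    (fq : ∀ s, deriv q s = σ s • h s)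
    (fh : ∀ s, deriv h s = σ s • q s + (σ s * κ s) • a s)
    (fa : ∀ s, deriv a s = -(σ s * κ s) • h s)
    (fc : ∀ s, deriv c s = q s)
    (hσκ : ∀ s, σ s * κ s ≠ 0) :
    ∀ s, mtriple (deriv (fun t => c t + R • a t) s) (a s) (deriv a s)
          / mdot (deriv a s) (deriv a s) = -(1 / (σ s * κ s)) ∧
        -(1 / (σ s * κ s)) ≠ 0 := by
  intro s
  set k := σ s * κ s with hk
  have hderiv : deriv (fun t => c t + R • a t) s = q s + R • deriv a s := by
    have : deriv (fun t => c t + R • a t) s = deriv c s + R • deriv a s := by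
      rw [deriv_fun_add (hc s) ((ha s).const_smul R) (g := fun t => R • a t)]
      rw [deriv_fun_const_smul R (ha s)]
    rw [this, fc s]
  have h0 := congrFun (hor s) 0
  have h1 := congrFun (hor s) 1
  have h2 := congrFun (hor s) 2
  simp [mcross, Pi.neg_apply] at h0 h1 h2
  have hA := haa s
  have hH := hhh s
  unfold mdot at hA hH
  have hnum : mtriple (q s + R • deriv a s) (a s) (deriv a s) = -k := by
    rw [fa s, ← hk]
    unfold mtriple mcross mdot
    simp only [Pi.add_apply, Pi.smul_apply, Pi.neg_apply, smul_eq_mul,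
      Matrix.cons_val_zero, Matrix.cons_val_one, Matrix.head_cons,
      Matrix.cons_val_two, Matrix.tail_cons]
    linear_combination (-k * a s 0) * h0 + (k * a s 1) * h1 + (k * a s 2) * h2 - k * hA
  have hden : mdot (deriv a s) (deriv a s) = k ^ 2 := by
    rw [fa s, ← hk]
    unfold mdot
    simp only [Pi.smul_apply, smul_eq_mul]
    linear_combination (k ^ 2) * hH
  rw [hderiv, hnum, hden]
  refine ⟨?_, neg_ne_zero.mpr (one_div_ne_zero (hσκ s))⟩
  have : k ≠ 0 := hσκ s
  field_simp
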